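/- Let α* := max{ν_s/L_s, ν_p/L_p, ν_r/L_r} (so that p_i(A) ≤ α*·A for all A ≥ 0 and i = s, p, r), let φ_a* := √(α*/D_A) and g*(K) := f_s(K) + f_r(K). If the applied antibiotic dose U satisfies U ≥ cosh(φ_a*·g*(K)/σ)/min(k_d, k_d^r), then for every L > 0 there is no continuous nontrivial steady state of the biofilm system on [0, L] with A(L) = U; i.e. only the trivial disinfection state with L = 0 exists, so the sufficient-dose threshold u2 of Theorem 3 satisfies u2 ≤ cosh(φ_a*·g*(K)/σ)/min(k_d, k_d^r) (Theorem 3, part 2). -/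

import Mathlib

/-- Parameters of the biofilm model: maximum growth rates `αs, αr`, antibiotic uptake
rates `νs, νp, νr`, half-saturation constants `Ls, Lp, Lr, L'`, persister reversion
rates `kr0` (no antibiotic) and `kr1` (antibiotic present), killing rates `kd, kdr, kdp`,
conversion rate `kl`, detachment constant `σ`, diffusivities `DA, DC`, bulk nutrient
level `K`, conjugation rate `μ` and mis-segregation rate `q`. -/
structure BiofilmParams where
  αs : ℝ
  αr : ℝ
  νs : ℝ
  νp : ℝ
  νr : ℝ
  Ls : ℝ
  Lp : ℝ
  Lr : ℝ
  L' : ℝ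
  kr0 : ℝ
  kr1 : ℝ
  kd : ℝ
  kdr : ℝ
  kdp : ℝ
  kl : ℝ
  σ : ℝ
  DA : ℝ
  DC : ℝ
  K : ℝ
  μ : ℝ
  q : ℝ
  hαs : 0 < αs
  hαr : 0 < αr
  hνs : 0 < νs
  hνp : 0 < νp
  hνr : 0 < νr
  hLs : 0 < Ls
  hLp : 0 < Lp
  hLr : 0 < Lr
  hL' : 0 < L'
  hkr0 : 0 < kr0
  hkr1 : 0 < kr1
  hkd : 0 < kd
  hkdr : 0 < kdr
  hkdp : 0 < kdp
  hkl : 0 < kl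
  hσ : 0 < σ
  hDA : 0 < DA
  hDC : 0 < DC
  hK : 0 < K
  hμ : 0 ≤ μ
  hq0 : 0 < q
  hq1 : q < 1

namespace BiofilmParams

variable (P : BiofilmParams)

/-- Growth rate of susceptible bacteria `f_s(C) = α_s C/(L_s + C)`. -/
noncomputable def fs (c : ℝ) : ℝ := P.αs * c / (P.Ls + c)

/-- Growth rate of resistant bacteria `f_r(C) = α_r C/(L_r + C)`. -/
noncomputable def fr (c : ℝ) : ℝ := P.αr * c / (P.Lr + c)

/-- Killing rate of persisters `g_p(A) = k_d^p A/(L' + A)`. -/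
noncomputable def gp (a : ℝ) : ℝ := P.kdp * a / (P.L' + a)

/-- Antibiotic consumption by susceptibles `p_s(A) = ν_s A/(L_s + A)`. -/
noncomputable def ps (a : ℝ) : ℝ := P.νs * a / (P.Ls + a)

/-- Antibiotic consumption by persisters `p_p(A) = ν_p A/(L_p + A)`. -/
noncomputable def pp (a : ℝ) : ℝ := P.νp * a / (P.Lp + a)

/-- Antibiotic consumption by resisters `p_r(A) = ν_r A/(L_r + A)`. -/
noncomputable def pr (a : ℝ) : ℝ := P.νr * a / (P.Lr + a)

/-- Persister reversion rate `k_r(A)`: `k_r^0` if `A = 0`, `k_r^1` otherwise. -/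
noncomputable def krA (a : ℝ) : ℝ := if a = 0 then P.kr0 else P.kr1

end BiofilmParams

/-- A continuous steady state of the biofilm system on `[0, L]` with applied dose
`A(L) = U`: nonnegative functions summing to `1`, satisfying the steady-state
advection/diffusion–reaction equations on `(0, L)` together with the boundary
conditions at `x = 0` and `x = L`. -/
structure IsSteadyState (P : BiofilmParams) (L U : ℝ)
    (Bs Bp Br Bd A C v : ℝ → ℝ) : Prop where
  nonneg_Bs : ∀ x ∈ Set.Icc 0 L, 0 ≤ Bs x
  nonneg_Bp : ∀ x ∈ Set.Icc 0 L, 0 ≤ Bp x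
  nonneg_Br : ∀ x ∈ Set.Icc 0 L, 0 ≤ Br x
  nonneg_Bd : ∀ x ∈ Set.Icc 0 L, 0 ≤ Bd x
  nonneg_A : ∀ x ∈ Set.Icc 0 L, 0 ≤ A x
  nonneg_C : ∀ x ∈ Set.Icc 0 L, 0 ≤ C x
  nonneg_v : ∀ x ∈ Set.Icc 0 L, 0 ≤ v x
  sum_one : ∀ x ∈ Set.Icc 0 L, Bs x + Bp x + Br x + Bd x = 1
  cont_Bs : ContinuousOn Bs (Set.Icc 0 L)
  cont_Bp : ContinuousOn Bp (Set.Icc 0 L)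
  cont_Br : ContinuousOn Br (Set.Icc 0 L)
  cont_Bd : ContinuousOn Bd (Set.Icc 0 L)
  diff_vBs : ∀ x ∈ Set.Icc 0 L, DifferentiableAt ℝ (fun y => v y * Bs y) x
  diff_vBp : ∀ x ∈ Set.Icc 0 L, DifferentiableAt ℝ (fun y => v y * Bp y) x
  diff_vBr : ∀ x ∈ Set.Icc 0 L, DifferentiableAt ℝ (fun y => v y * Br y) x
  diff_vBd : ∀ x ∈ Set.Icc 0 L, DifferentiableAt ℝ (fun y => v y * Bd y) x
  diff_v : ∀ x ∈ Set.Icc 0 L, DifferentiableAt ℝ v x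
  diff_A : ∀ x ∈ Set.Icc 0 L, DifferentiableAt ℝ A x
  diff_A' : ∀ x ∈ Set.Icc 0 L, DifferentiableAt ℝ (deriv A) x
  diff_C : ∀ x ∈ Set.Icc 0 L, DifferentiableAt ℝ C x
  diff_C' : ∀ x ∈ Set.Icc 0 L, DifferentiableAt ℝ (deriv C) x
  eq_Bs : ∀ x ∈ Set.Ioo 0 L, deriv (fun y => v y * Bs y) x =
    (1 - P.kd * A x - P.kl) * P.fs (C x) * Bs x + P.krA (A x) * Bp x
      - P.μ * Br x * Bs x + P.q * P.fr (C x) * Br x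
  eq_Bp : ∀ x ∈ Set.Ioo 0 L, deriv (fun y => v y * Bp y) x =
    P.kl * P.fs (C x) * Bs x - P.krA (A x) * Bp x - P.gp (A x) * Bp x
  eq_Br : ∀ x ∈ Set.Ioo 0 L, deriv (fun y => v y * Br y) x =
    (1 - P.kdr * A x - P.q) * P.fr (C x) * Br x + P.μ * Br x * Bs x
  eq_Bd : ∀ x ∈ Set.Ioo 0 L, deriv (fun y => v y * Bd y) x =
    P.kd * A x * P.fs (C x) * Bs x + P.kdr * A x * P.fr (C x) * Br x + P.gp (A x) * Bp x
  eq_A : ∀ x ∈ Set.Ioo 0 L, P.DA * deriv (deriv A) x =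
    P.ps (A x) * Bs x + P.pp (A x) * Bp x + P.pr (A x) * Br x
  eq_C : ∀ x ∈ Set.Ioo 0 L, P.DC * deriv (deriv C) x =
    P.fs (C x) * Bs x + P.fr (C x) * Br x
  eq_v : ∀ x ∈ Set.Ioo 0 L, deriv v x = P.fs (C x) * Bs x + P.fr (C x) * Br x
  bc_Bs : deriv Bs 0 = 0
  bc_Bp : deriv Bp 0 = 0
  bc_Br : deriv Br 0 = 0
  bc_Bd : deriv Bd 0 = 0
  bc_A' : deriv A 0 = 0
  bc_AL : A L = U
  bc_C' : deriv C 0 = 0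
  bc_CL : C L = P.K
  bc_v0 : v 0 = 0
  bc_vL : v L = P.σ * L ^ 2

/-- A steady state is nontrivial if the live bacterial fraction `B_s + B_p + B_r` is not
identically zero on `[0, L]`. -/
def NontrivialState (L : ℝ) (Bs Bp Br : ℝ → ℝ) : Prop :=
  ∃ x ∈ Set.Icc 0 L, Bs x + Bp x + Br x ≠ 0

open Set

section helpers

lemma frac_nonneg {ν Lc a : ℝ} (hν : 0 < ν) (hL : 0 < Lc) (ha : 0 ≤ a) :
    0 ≤ ν * a / (Lc + a) :=
  div_nonneg (mul_nonneg hν.le ha) (by linarith)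

lemma frac_mono {ν Lc a b : ℝ} (hν : 0 < ν) (hL : 0 < Lc) (ha : 0 ≤ a) (hab : a ≤ b) :
    ν * a / (Lc + a) ≤ ν * b / (Lc + b) := by
  rw [div_le_div_iff₀ (by linarith) (by linarith)]
  nlinarith [mul_le_mul_of_nonneg_left hab (mul_nonneg hν.le hL.le)]

lemma frac_le_lin {ν Lc a : ℝ} (hν : 0 < ν) (hL : 0 < Lc) (ha : 0 ≤ a) :
    ν * a / (Lc + a) ≤ ν / Lc * a := by
  have h1 : ν * a / (Lc + a) ≤ ν * a / Lc :=
    div_le_div_of_nonneg_left (mul_nonneg hν.le ha) hL (by linarith)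
  have h2 : ν * a / Lc = ν / Lc * a := by ring
  linarith

end helpers


lemma cosh_lower_bound {L U φ : ℝ} (hL : 0 < L) (hφ : 0 < φ) (hU : 0 ≤ U)
    {A : ℝ → ℝ}
    (hdA : ∀ x ∈ Set.Icc 0 L, DifferentiableAt ℝ A x)
    (hdA' : ∀ x ∈ Set.Icc 0 L, DifferentiableAt ℝ (deriv A) x)
    (hineq : ∀ x ∈ Set.Ioo 0 L, deriv (deriv A) x ≤ φ ^ 2 * A x)
    (hA'0 : deriv A 0 = 0) (hAL : A L = U) :
    ∀ x ∈ Set.Icc 0 L, U / Real.cosh (φ * L) ≤ A x := by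
  set c : ℝ := U / Real.cosh (φ * L) with hc
  have hcoshpos : 0 < Real.cosh (φ * L) := Real.cosh_pos _
  have hc0 : 0 ≤ c := div_nonneg hU hcoshpos.le
  set w : ℝ → ℝ := fun x => A x - c * Real.cosh (φ * x) with hw
  -- derivative of the cosh part
  have hcosh : ∀ x : ℝ, HasDerivAt (fun y => c * Real.cosh (φ * y))
      (c * (Real.sinh (φ * x) * φ)) x := by
    intro x
    have h1 : HasDerivAt (fun y : ℝ => φ * y) φ x := by
      simpa using (hasDerivAt_id x).const_mul φ
    exact ((Real.hasDerivAt_cosh (φ * x)).comp x h1).const_mul c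
  have hsinh : ∀ x : ℝ, HasDerivAt (fun y => c * (Real.sinh (φ * y) * φ))
      (c * (Real.cosh (φ * x) * φ * φ)) x := by
    intro x
    have h1 : HasDerivAt (fun y : ℝ => φ * y) φ x := by
      simpa using (hasDerivAt_id x).const_mul φ
    have := (((Real.hasDerivAt_sinh (φ * x)).comp x h1).mul_const φ).const_mul c
    simpa [mul_assoc] using this
  have hdw : ∀ x ∈ Set.Icc 0 L, DifferentiableAt ℝ w x := fun x hx =>
    (hdA x hx).sub (hcosh x).differentiableAt
  have hcontA : ContinuousOn A (Icc 0 L) :=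
    fun x hx => ((hdA x hx).continuousAt).continuousWithinAt
  have hcontw : ContinuousOn w (Icc 0 L) :=
    fun x hx => ((hdw x hx).continuousAt).continuousWithinAt
  have hderivw : ∀ x ∈ Set.Icc 0 L, deriv w x = deriv A x - c * (Real.sinh (φ * x) * φ) := by
    intro x hx
    rw [hw, deriv_fun_sub (hdA x hx) (hcosh x).differentiableAt, (hcosh x).deriv]
  have hcontw' : ContinuousOn (deriv w) (Icc 0 L) := by
    have hco : ContinuousOn (fun x => deriv A x - c * (Real.sinh (φ * x) * φ)) (Icc 0 L) := by
      apply ContinuousOn.sub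
      · exact fun x hx => ((hdA' x hx).continuousAt).continuousWithinAt
      · exact (continuous_const.mul ((Real.continuous_sinh.comp
          (continuous_const.mul continuous_id)).mul continuous_const)).continuousOn
    exact hco.congr (fun x hx => hderivw x hx)
  have hwL : w L = 0 := by
    simp only [hw, hAL, hc]
    field_simp
    ring
  -- second derivative inequality
  have hw'' : ∀ x ∈ Set.Ioo 0 L, deriv (deriv w) x ≤ φ ^ 2 * w x := by
    intro x hx
    have hnhds : Icc 0 L ∈ nhds x := Icc_mem_nhds hx.1 hx.2
    have heq : deriv w =ᶠ[nhds x] fun y => deriv A y - c * (Real.sinh (φ * y) * φ) :=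
      Filter.eventuallyEq_of_mem hnhds (fun y hy => hderivw y hy)
    rw [heq.deriv_eq]
    rw [deriv_fun_sub (hdA' x (Ioo_subset_Icc_self hx)) (hsinh x).differentiableAt,
      (hsinh x).deriv]
    have h1 := hineq x hx
    have : c * (Real.cosh (φ * x) * φ * φ) = φ ^ 2 * (c * Real.cosh (φ * x)) := by ring
    rw [this]
    simp only [hw]
    nlinarith [h1]
  -- main claim: w ≥ 0 on Icc 0 L
  have hmain : ∀ x ∈ Set.Icc 0 L, 0 ≤ w x := by
    by_contra hcon
    push_neg at hcon
    obtain ⟨x₀, hx₀, hx₀neg⟩ := hcon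
    obtain ⟨xs, hxs, hxsmin⟩ := (isCompact_Icc (a := (0:ℝ)) (b := L)).exists_isMinOn
      (nonempty_Icc.mpr hL.le) hcontw
    have hwneg : w xs < 0 := lt_of_le_of_lt (hxsmin hx₀) hx₀neg
    have hxsL : xs ≠ L := by
      intro h; rw [h, hwL] at hwneg; exact lt_irrefl 0 hwneg
    have hxsltL : xs < L := lt_of_le_of_ne hxs.2 hxsL
    -- deriv w xs = 0
    have hw'xs : deriv w xs = 0 := by
      rcases eq_or_lt_of_le hxs.1 with h0 | h0
      · rw [← h0, hderivw 0 (left_mem_Icc.mpr hL.le)]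
        simp [hA'0]
      · have : IsLocalMin w xs := hxsmin.isLocalMin (Icc_mem_nhds h0 hxsltL)
        exact this.deriv_eq_zero
    -- first zero after xs
    set S : Set ℝ := Icc xs L ∩ {x | w x = 0} with hS
    have hScl : IsClosed S := by
      apply ContinuousOn.preimage_isClosed_of_isClosed
        (hcontw.mono (Icc_subset_Icc hxs.1 le_rfl)) isClosed_Icc isClosed_singleton
    have hLS : L ∈ S := ⟨⟨hxsltL.le, le_rfl⟩, hwL⟩
    have hSne : S.Nonempty := ⟨L, hLS⟩
    have hSbdd : BddBelow S := ⟨xs, fun y hy => hy.1.1⟩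
    set b : ℝ := sInf S with hb
    have hbS : b ∈ S := hScl.csInf_mem hSne hSbdd
    have hxsb : xs < b := by
      rcases eq_or_lt_of_le hbS.1.1 with h | h
      · exfalso; rw [← h] at hbS; rw [hbS.2] at hwneg; exact lt_irrefl 0 hwneg
      · exact h
    have hbL : b ≤ L := hbS.1.2
    have hIccsub : Icc xs b ⊆ Icc 0 L := Icc_subset_Icc hxs.1 hbL
    -- w < 0 on Ico xs b
    have hneg : ∀ y ∈ Ico xs b, w y < 0 := by
      intro y hy
      by_contra hge
      push_neg at hge
      have hsub : Icc xs y ⊆ Icc 0 L := Icc_subset_Icc hxs.1 (hy.2.le.trans hbL)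
      have := intermediate_value_Icc hy.1 (hcontw.mono hsub)
      have h0mem : (0:ℝ) ∈ Icc (w xs) (w y) := ⟨hwneg.le, hge⟩
      obtain ⟨z, hz, hz0⟩ := this h0mem
      have hzS : z ∈ S := ⟨⟨hz.1, hz.2.trans (hy.2.le.trans hbL)⟩, hz0⟩
      have : b ≤ z := csInf_le hSbdd hzS
      linarith [hz.2, hy.2]
    -- deriv w strictly decreasing on Icc xs b
    have hanti' : StrictAntiOn (deriv w) (Icc xs b) := by
      apply strictAntiOn_of_deriv_neg (convex_Icc xs b) (hcontw'.mono hIccsub)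
      intro y hy
      rw [interior_Icc] at hy
      have hyI : y ∈ Ioo 0 L := ⟨lt_of_le_of_lt hxs.1 hy.1, lt_of_lt_of_le hy.2 hbL⟩
      have h1 := hw'' y hyI
      have h2 : w y < 0 := hneg y ⟨hy.1.le, hy.2⟩
      have h3 : φ ^ 2 * w y < 0 := mul_neg_of_pos_of_neg (pow_pos hφ 2) h2
      linarith
    have hderivneg : ∀ y ∈ Ioo xs b, deriv w y < 0 := by
      intro y hy
      have := hanti' (left_mem_Icc.mpr hxsb.le) ⟨hy.1.le, hy.2.le⟩ hy.1
      rwa [hw'xs] at this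
    have hanti : StrictAntiOn w (Icc xs b) := by
      apply strictAntiOn_of_deriv_neg (convex_Icc xs b) (hcontw.mono hIccsub)
      intro y hy
      rw [interior_Icc] at hy
      exact hderivneg y hy
    have := hanti (left_mem_Icc.mpr hxsb.le) (right_mem_Icc.mpr hxsb.le) hxsb
    rw [hbS.2] at this
    linarith
  -- conclude
  intro x hx
  have h1 := hmain x hx
  have h2 : (1:ℝ) ≤ Real.cosh (φ * x) := Real.one_le_cosh _
  have h3 : c * 1 ≤ c * Real.cosh (φ * x) := by nlinarith
  simp only [hw] at h1
  linarith

/-- Theorem 3, part 2: with `α* := max{ν_s/L_s, ν_p/L_p, ν_r/L_r}`,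
`φ_a* := √(α*/D_A)` and `g*(K) := f_s(K) + f_r(K)`, if the applied dose satisfies
`U ≥ cosh(φ_a* g*(K)/σ)/min(k_d, k_d^r)`, then for every `L > 0` there is no continuous
nontrivial steady state on `[0, L]` with `A(L) = U`: only the trivial disinfection state
with `L = 0` exists, so the sufficient-dose threshold `u2` satisfies
`u2 ≤ cosh(φ_a* g*(K)/σ)/min(k_d, k_d^r)`. -/
theorem stmt_19 (P : BiofilmParams) (U : ℝ)
    (hdose : Real.cosh (Real.sqrt (max (P.νs / P.Ls) (max (P.νp / P.Lp) (P.νr / P.Lr)) / P.DA)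
        * (P.fs P.K + P.fr P.K) / P.σ) / min P.kd P.kdr ≤ U) :
    ∀ L : ℝ, 0 < L →
      ¬ ∃ Bs Bp Br Bd A C v : ℝ → ℝ,
        IsSteadyState P L U Bs Bp Br Bd A C v ∧ NontrivialState L Bs Bp Br := by
  intro L hL
  rintro ⟨Bs, Bp, Br, Bd, A, C, v, ss, -⟩
  set α : ℝ := max (P.νs / P.Ls) (max (P.νp / P.Lp) (P.νr / P.Lr)) with hαdef
  set φ : ℝ := Real.sqrt (α / P.DA) with hφdef
  set g : ℝ := P.fs P.K + P.fr P.K with hgdef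
  set m : ℝ := min P.kd P.kdr with hmdef
  have hα : 0 < α := lt_of_lt_of_le (div_pos P.hνs P.hLs) (le_max_left _ _)
  have hφ : 0 < φ := Real.sqrt_pos.mpr (div_pos hα P.hDA)
  have hφ2 : φ ^ 2 = α / P.DA := Real.sq_sqrt (div_nonneg hα.le P.hDA.le)
  have hfsK : 0 < P.fs P.K :=
    div_pos (mul_pos P.hαs P.hK) (by linarith [P.hLs, P.hK])
  have hfrK : 0 < P.fr P.K :=
    div_pos (mul_pos P.hαr P.hK) (by linarith [P.hLr, P.hK])
  have hg : 0 < g := by rw [hgdef]; exact add_pos hfsK hfrK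
  have hm : 0 < m := lt_min P.hkd P.hkdr
  have hU0 : 0 < U := by
    refine lt_of_lt_of_le (div_pos (Real.cosh_pos _) hm) hdose
  have hL0mem : (0:ℝ) ∈ Icc 0 L := left_mem_Icc.mpr hL.le
  have hLmem : L ∈ Icc 0 L := right_mem_Icc.mpr hL.le
  -- nonnegativity of kinetic functions
  have hfs_nn : ∀ x ∈ Icc 0 L, 0 ≤ P.fs (C x) := fun x hx =>
    frac_nonneg P.hαs P.hLs (ss.nonneg_C x hx)
  have hfr_nn : ∀ x ∈ Icc 0 L, 0 ≤ P.fr (C x) := fun x hx =>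
    frac_nonneg P.hαr P.hLr (ss.nonneg_C x hx)
  have hgp_nn : ∀ x ∈ Icc 0 L, 0 ≤ P.gp (A x) := fun x hx =>
    frac_nonneg P.hkdp P.hL' (ss.nonneg_A x hx)
  -- Step 1: C ≤ K on [0, L]
  have hC'' : ∀ x ∈ Ioo 0 L, 0 ≤ deriv (deriv C) x := by
    intro x hx
    have hxI := Ioo_subset_Icc_self hx
    have h := ss.eq_C x hx
    have h1 : 0 ≤ P.fs (C x) * Bs x + P.fr (C x) * Br x :=
      add_nonneg (mul_nonneg (hfs_nn x hxI) (ss.nonneg_Bs x hxI))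
        (mul_nonneg (hfr_nn x hxI) (ss.nonneg_Br x hxI))
    by_contra hcon
    push_neg at hcon
    have : P.DC * deriv (deriv C) x < 0 := mul_neg_of_pos_of_neg P.hDC hcon
    linarith
  have hcontC' : ContinuousOn (deriv C) (Icc 0 L) := fun x hx =>
    (ss.diff_C' x hx).continuousAt.continuousWithinAt
  have hdiffC' : DifferentiableOn ℝ (deriv C) (interior (Icc 0 L)) := by
    rw [interior_Icc]
    exact fun x hx => (ss.diff_C' x (Ioo_subset_Icc_self hx)).differentiableWithinAt
  have hC'mono : MonotoneOn (deriv C) (Icc 0 L) :=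
    monotoneOn_of_deriv_nonneg (convex_Icc _ _) hcontC' hdiffC'
      (by rw [interior_Icc]; exact hC'')
  have hC'nn : ∀ x ∈ Icc 0 L, 0 ≤ deriv C x := by
    intro x hx
    have := hC'mono hL0mem hx hx.1
    rwa [ss.bc_C'] at this
  have hCmono : MonotoneOn C (Icc 0 L) := by
    apply monotoneOn_of_deriv_nonneg (convex_Icc _ _)
      (fun x hx => (ss.diff_C x hx).continuousAt.continuousWithinAt)
    · rw [interior_Icc]
      exact fun x hx => (ss.diff_C x (Ioo_subset_Icc_self hx)).differentiableWithinAt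
    · rw [interior_Icc]
      exact fun x hx => hC'nn x (Ioo_subset_Icc_self hx)
  have hCK : ∀ x ∈ Icc 0 L, C x ≤ P.K := by
    intro x hx
    have := hCmono hx hLmem hx.2
    rwa [ss.bc_CL] at this
  -- Step 2: L ≤ g / σ
  have hB1 : ∀ x ∈ Icc 0 L, Bs x ≤ 1 ∧ Br x ≤ 1 ∧ Bs x + Bp x + Br x ≤ 1 := by
    intro x hx
    have h := ss.sum_one x hx
    have h1 := ss.nonneg_Bs x hx
    have h2 := ss.nonneg_Bp x hx
    have h3 := ss.nonneg_Br x hx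
    have h4 := ss.nonneg_Bd x hx
    exact ⟨by linarith, by linarith, by linarith⟩
  have hv'le : ∀ x ∈ Ioo 0 L, deriv v x ≤ g := by
    intro x hx
    have hxI := Ioo_subset_Icc_self hx
    rw [ss.eq_v x hx]
    have hfsle : P.fs (C x) ≤ P.fs P.K :=
      frac_mono P.hαs P.hLs (ss.nonneg_C x hxI) (hCK x hxI)
    have hfrle : P.fr (C x) ≤ P.fr P.K :=
      frac_mono P.hαr P.hLr (ss.nonneg_C x hxI) (hCK x hxI)
    have h1 : P.fs (C x) * Bs x ≤ P.fs P.K := by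
      nlinarith [hfs_nn x hxI, ss.nonneg_Bs x hxI, (hB1 x hxI).1]
    have h2 : P.fr (C x) * Br x ≤ P.fr P.K := by
      nlinarith [hfr_nn x hxI, ss.nonneg_Br x hxI, (hB1 x hxI).2.1]
    rw [hgdef]; linarith
  have hLle : L ≤ g / P.σ := by
    have hdu : ∀ x ∈ Icc 0 L, HasDerivAt (fun y => g * y - v y) (g - deriv v x) x := by
      intro x hx
      exact HasDerivAt.sub (by simpa using (hasDerivAt_id x).const_mul g)
        (ss.diff_v x hx).hasDerivAt
    have humono : MonotoneOn (fun y => g * y - v y) (Icc 0 L) := by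
      apply monotoneOn_of_deriv_nonneg (convex_Icc _ _)
        (fun x hx => (hdu x hx).differentiableAt.continuousAt.continuousWithinAt)
      · rw [interior_Icc]
        exact fun x hx =>
          (hdu x (Ioo_subset_Icc_self hx)).differentiableAt.differentiableWithinAt
      · rw [interior_Icc]
        intro x hx
        rw [(hdu x (Ioo_subset_Icc_self hx)).deriv]
        linarith [hv'le x hx]
    have h := humono hL0mem hLmem hL.le
    simp only [mul_zero, ss.bc_v0, sub_zero, ss.bc_vL] at h
    rw [le_div_iff₀ P.hσ]
    nlinarith
  -- Step 3: second derivative inequality for A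
  have hA'' : ∀ x ∈ Ioo 0 L, deriv (deriv A) x ≤ φ ^ 2 * A x := by
    intro x hx
    have hxI := Ioo_subset_Icc_self hx
    have h := ss.eq_A x hx
    have hAx := ss.nonneg_A x hxI
    have hps : P.ps (A x) ≤ α * A x := by
      have := frac_le_lin P.hνs P.hLs hAx
      have h2 : P.νs / P.Ls * A x ≤ α * A x :=
        mul_le_mul_of_nonneg_right (le_max_left _ _) hAx
      simp only [BiofilmParams.ps]; linarith
    have hpp : P.pp (A x) ≤ α * A x := by
      have := frac_le_lin P.hνp P.hLp hAx
      have h2 : P.νp / P.Lp * A x ≤ α * A x :=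
        mul_le_mul_of_nonneg_right ((le_max_left _ _).trans (le_max_right _ _)) hAx
      simp only [BiofilmParams.pp]; linarith
    have hpr : P.pr (A x) ≤ α * A x := by
      have := frac_le_lin P.hνr P.hLr hAx
      have h2 : P.νr / P.Lr * A x ≤ α * A x :=
        mul_le_mul_of_nonneg_right ((le_max_right _ _).trans (le_max_right _ _)) hAx
      simp only [BiofilmParams.pr]; linarith
    have hsum : P.ps (A x) * Bs x + P.pp (A x) * Bp x + P.pr (A x) * Br x ≤ α * A x := by
      have e1 : P.ps (A x) * Bs x ≤ α * A x * Bs x :=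
        mul_le_mul_of_nonneg_right hps (ss.nonneg_Bs x hxI)
      have e2 : P.pp (A x) * Bp x ≤ α * A x * Bp x :=
        mul_le_mul_of_nonneg_right hpp (ss.nonneg_Bp x hxI)
      have e3 : P.pr (A x) * Br x ≤ α * A x * Br x :=
        mul_le_mul_of_nonneg_right hpr (ss.nonneg_Br x hxI)
      have e4 : α * A x * Bs x + α * A x * Bp x + α * A x * Br x
          = α * A x * (Bs x + Bp x + Br x) := by ring
      have e5 : α * A x * (Bs x + Bp x + Br x) ≤ α * A x * 1 :=
        mul_le_mul_of_nonneg_left (hB1 x hxI).2.2 (mul_nonneg hα.le hAx)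
      linarith [e1, e2, e3, e5, e4.le, e4.ge]
    rw [hφ2, div_mul_eq_mul_div, le_div_iff₀ P.hDA]
    linarith
  -- Step 4: lower bound for A
  have hAlow := cosh_lower_bound hL hφ hU0.le ss.diff_A ss.diff_A' hA'' ss.bc_A' ss.bc_AL
  have hArg : φ * L ≤ φ * g / P.σ := by
    rw [mul_div_assoc]
    exact mul_le_mul_of_nonneg_left hLle hφ.le
  have hcoshle : Real.cosh (φ * L) ≤ Real.cosh (φ * g / P.σ) := by
    rw [Real.cosh_le_cosh, abs_of_nonneg (mul_nonneg hφ.le hL.le),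
      abs_of_nonneg (div_nonneg (mul_nonneg hφ.le hg.le) P.hσ.le)]
    exact hArg
  have h1 : U / Real.cosh (φ * g / P.σ) ≤ U / Real.cosh (φ * L) :=
    div_le_div_of_nonneg_left hU0.le (Real.cosh_pos _) hcoshle
  have h2 : 1 / m ≤ U / Real.cosh (φ * g / P.σ) := by
    have hd2 : Real.cosh (φ * g / P.σ) ≤ U * m := (div_le_iff₀ hm).mp hdose
    rw [div_le_div_iff₀ hm (Real.cosh_pos _)]
    linarith
  have hAm : ∀ x ∈ Icc 0 L, 1 / m ≤ A x := fun x hx =>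
    le_trans (le_trans h2 h1) (hAlow x hx)
  have hkdA : ∀ x ∈ Icc 0 L, 1 ≤ P.kd * A x := by
    intro x hx
    have := le_trans (one_div_le_one_div_of_le hm (min_le_left _ _)) (hAm x hx)
    exact (div_le_iff₀' P.hkd).mp this
  have hkdrA : ∀ x ∈ Icc 0 L, 1 ≤ P.kdr * A x := by
    intro x hx
    have := le_trans (one_div_le_one_div_of_le hm (min_le_right _ _)) (hAm x hx)
    exact (div_le_iff₀' P.hkdr).mp this
  -- Step 5: total live biomass flux W := v(Bs+Bp+Br) is ≡ 0
  set W : ℝ → ℝ := fun y => v y * Bs y + v y * Bp y + v y * Br y with hWdef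
  have hdW : ∀ x ∈ Icc 0 L, DifferentiableAt ℝ W x := fun x hx =>
    ((ss.diff_vBs x hx).add (ss.diff_vBp x hx)).add (ss.diff_vBr x hx)
  have hderivW : ∀ x ∈ Ioo 0 L, deriv W x ≤ 0 := by
    intro x hx
    have hxI := Ioo_subset_Icc_self hx
    have hWd : HasDerivAt W
        (deriv (fun y => v y * Bs y) x + deriv (fun y => v y * Bp y) x
          + deriv (fun y => v y * Br y) x) x :=
      ((ss.diff_vBs x hxI).hasDerivAt.add (ss.diff_vBp x hxI).hasDerivAt).add
        (ss.diff_vBr x hxI).hasDerivAt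
    rw [hWd.deriv, ss.eq_Bs x hx, ss.eq_Bp x hx, ss.eq_Br x hx]
    have t1 : 0 ≤ (P.kd * A x - 1) * (P.fs (C x) * Bs x) :=
      mul_nonneg (by linarith [hkdA x hxI])
        (mul_nonneg (hfs_nn x hxI) (ss.nonneg_Bs x hxI))
    have t2 : 0 ≤ (P.kdr * A x - 1) * (P.fr (C x) * Br x) :=
      mul_nonneg (by linarith [hkdrA x hxI])
        (mul_nonneg (hfr_nn x hxI) (ss.nonneg_Br x hxI))
    have t3 : 0 ≤ P.gp (A x) * Bp x :=
      mul_nonneg (hgp_nn x hxI) (ss.nonneg_Bp x hxI)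
    nlinarith [t1, t2, t3]
  have hWanti : AntitoneOn W (Icc 0 L) := by
    apply antitoneOn_of_deriv_nonpos (convex_Icc _ _)
      (fun x hx => (hdW x hx).continuousAt.continuousWithinAt)
    · rw [interior_Icc]
      exact fun x hx => (hdW x (Ioo_subset_Icc_self hx)).differentiableWithinAt
    · rw [interior_Icc]; exact hderivW
  have hW0 : W 0 = 0 := by simp [hWdef, ss.bc_v0]
  have hWz : ∀ x ∈ Icc 0 L, W x = 0 := by
    intro x hx
    have hle : W x ≤ 0 := by
      have := hWanti hL0mem hx hx.1
      rwa [hW0] at this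
    have hge : 0 ≤ W x := by
      have hv := ss.nonneg_v x hx
      exact add_nonneg (add_nonneg (mul_nonneg hv (ss.nonneg_Bs x hx))
        (mul_nonneg hv (ss.nonneg_Bp x hx))) (mul_nonneg hv (ss.nonneg_Br x hx))
    linarith
  -- Step 6: deriv v = 0 on (0, L)
  have hv0 : ∀ x ∈ Ioo 0 L, deriv v x = 0 := by
    intro x hx
    have hxI := Ioo_subset_Icc_self hx
    rcases (ss.nonneg_v x hxI).eq_or_lt with hv | hv
    · have hmin : IsMinOn v (Icc 0 L) x :=
        isMinOn_iff.mpr fun y hy => by rw [← hv]; exact ss.nonneg_v y hy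
      exact (hmin.isLocalMin (Icc_mem_nhds hx.1 hx.2)).deriv_eq_zero
    · have hWx := hWz x hxI
      have e1 : 0 ≤ v x * Bs x := mul_nonneg hv.le (ss.nonneg_Bs x hxI)
      have e2 : 0 ≤ v x * Bp x := mul_nonneg hv.le (ss.nonneg_Bp x hxI)
      have e3 : 0 ≤ v x * Br x := mul_nonneg hv.le (ss.nonneg_Br x hxI)
      have hBs0 : Bs x = 0 := by
        have : v x * Bs x = 0 := by simp only [hWdef] at hWx; linarith
        rcases mul_eq_zero.mp this with h | h
        · exact absurd h hv.ne'
        · exact h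
      have hBr0 : Br x = 0 := by
        have : v x * Br x = 0 := by simp only [hWdef] at hWx; linarith
        rcases mul_eq_zero.mp this with h | h
        · exact absurd h hv.ne'
        · exact h
      rw [ss.eq_v x hx, hBs0, hBr0]; ring
  -- Step 7: v is constant, contradiction with v(L) = σ L²
  have hvcont : ContinuousOn v (Icc 0 L) := fun x hx =>
    (ss.diff_v x hx).continuousAt.continuousWithinAt
  have hvdiff : DifferentiableOn ℝ v (interior (Icc 0 L)) := by
    rw [interior_Icc]
    exact fun x hx => (ss.diff_v x (Ioo_subset_Icc_self hx)).differentiableWithinAt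
  have hmono : MonotoneOn v (Icc 0 L) :=
    monotoneOn_of_deriv_nonneg (convex_Icc _ _) hvcont hvdiff
      (by rw [interior_Icc]; exact fun x hx => (hv0 x hx).ge)
  have hanti : AntitoneOn v (Icc 0 L) :=
    antitoneOn_of_deriv_nonpos (convex_Icc _ _) hvcont hvdiff
      (by rw [interior_Icc]; exact fun x hx => (hv0 x hx).le)
  have hvL : v L = v 0 :=
    le_antisymm (hanti hL0mem hLmem hL.le) (hmono hL0mem hLmem hL.le)
  rw [ss.bc_vL, ss.bc_v0] at hvL
  nlinarith [mul_pos P.hσ (mul_pos hL hL), sq_abs L]
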